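/- With d, p, q, the cone C, and G_f as in the context, suppose f : C → ℂ is continuous, homogeneous of degree zero, and rapidly decreasing on the hyperboloid {Q = -1}. Then for every s ∈ ℝ, writing z = e^{-s}, the following change-of-variables identity holds: ∫_{ℝ^{d(q-p)}} ∫_{ℝ^{dp}} ∫_{ℝ^{d-1}} f( sinh s - (1/2)e^s|v'|², e^s w, u, -u, -v', e^s w, cosh s - (1/2)e^s|v'|² ) dw du dv' = e^{-ds} ∫_{-sinh s}^{∞} G_f( -v, -(1+2zv-z²)^{1/2}, z - v ) · (1+2zv-z²)^{d(q-p)/2 - 1} dv, both sides being absolutely convergent. -/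

import Mathlib

open MeasureTheory

/-- Points of `ℝⁿ`, `n = d(p+q+2)`, written as
`x = (a, w₁, u, u', y, w₂, b) ∈ ℝ × ℝ^{d-1} × ℝ^{dp} × ℝ^{dp} × ℝ^{d(q-p)} × ℝ^{d-1} × ℝ`. -/
abbrev HypPoint (d p q : ℕ) :=
  ℝ × (Fin (d - 1) → ℝ) × (Fin (d * p) → ℝ) × (Fin (d * p) → ℝ) ×
    (Fin (d * (q - p)) → ℝ) × (Fin (d - 1) → ℝ) × ℝ

/-- The quadratic form `Q(x) = a² + |w₁|² + |u|² - |u'|² - |y|² - |w₂|² - b²`. -/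
def Qform {d p q : ℕ} (x : HypPoint d p q) : ℝ :=
  x.1 ^ 2 + (∑ i, x.2.1 i ^ 2) + (∑ i, x.2.2.1 i ^ 2) - (∑ i, x.2.2.2.1 i ^ 2) -
    (∑ i, x.2.2.2.2.1 i ^ 2) - (∑ i, x.2.2.2.2.2.1 i ^ 2) - x.2.2.2.2.2.2 ^ 2

/-- The Euclidean norm `|x|` of a point `x`. -/
noncomputable def normE {d p q : ℕ} (x : HypPoint d p q) : ℝ :=
  Real.sqrt (x.1 ^ 2 + (∑ i, x.2.1 i ^ 2) + (∑ i, x.2.2.1 i ^ 2) + (∑ i, x.2.2.2.1 i ^ 2) +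
    (∑ i, x.2.2.2.2.1 i ^ 2) + (∑ i, x.2.2.2.2.2.1 i ^ 2) + x.2.2.2.2.2.2 ^ 2)

/-- `G_f(t₁,t₂,t₃) = ∫_{S^{d(q-p)-1}} ∫_{ℝ^{dp}} ∫_{ℝ^{d-1}} f(t₁, w̄, u, -u, t₂v̄, w̄, t₃)
dw̄ du dσ(v̄)`, where `σ` is the surface measure on the unit sphere
`S^{d(q-p)-1} ⊂ ℝ^{d(q-p)}`. -/
noncomputable def Gf {d p q : ℕ} (f : HypPoint d p q → ℂ) (t : ℝ × ℝ × ℝ) : ℂ :=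
  ∫ vb : Metric.sphere (0 : EuclideanSpace ℝ (Fin (d * (q - p)))) 1,
    (∫ u : Fin (d * p) → ℝ, ∫ wb : Fin (d - 1) → ℝ,
      f (t.1, wb, u, -u,
        fun i => t.2.1 * (vb : EuclideanSpace ℝ (Fin (d * (q - p)))) i, wb, t.2.2))
    ∂(volume : Measure (EuclideanSpace ℝ (Fin (d * (q - p))))).toSphere



section Helpers
open Set

lemma integrableOn_iff_comap {α G : Type*} [MeasurableSpace α] [NormedAddCommGroup G]
    {μ : Measure α} {s : Set α} (hs : MeasurableSet s) (f : α → G) :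
    IntegrableOn f s μ ↔ Integrable (fun x : s => f x) (Measure.comap Subtype.val μ) := by
  rw [IntegrableOn, ← map_comap_subtype_coe hs,
    (MeasurableEmbedding.subtype_coe hs).integrable_map_iff]
  exact Iff.rfl

lemma integral_volumeIoiPow' {G : Type*} [NormedAddCommGroup G] [NormedSpace ℝ G] (n : ℕ)
    (φ : ℝ → G) :
    (∫ r : Set.Ioi (0:ℝ), φ r ∂(Measure.volumeIoiPow n)) =
      ∫ r in Set.Ioi (0:ℝ), r ^ n • φ r := by
  simp only [Measure.volumeIoiPow, ENNReal.ofReal]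
  rw [integral_withDensity_eq_integral_smul
      ((measurable_subtype_coe.pow_const _).real_toNNReal),
    integral_subtype_comap measurableSet_Ioi (fun a : ℝ => (a ^ n).toNNReal • φ a)]
  refine setIntegral_congr_fun measurableSet_Ioi fun x hx => ?_
  rw [NNReal.smul_def, Real.coe_toNNReal _ (pow_nonneg hx.out.le _)]

lemma integrable_volumeIoiPow_iff' {G : Type*} [NormedAddCommGroup G] [NormedSpace ℝ G] (n : ℕ)
    (φ : ℝ → G) :
    Integrable (fun r : Set.Ioi (0:ℝ) => φ r) (Measure.volumeIoiPow n) ↔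
      IntegrableOn (fun r => r ^ n • φ r) (Set.Ioi (0:ℝ)) := by
  simp only [Measure.volumeIoiPow, ENNReal.ofReal]
  rw [integrable_withDensity_iff_integrable_smul
      ((measurable_subtype_coe.pow_const _).real_toNNReal),
    ← integrableOn_iff_comap measurableSet_Ioi (fun a : ℝ => (a ^ n).toNNReal • φ a)]
  constructor
  · intro h
    refine h.congr_fun (fun x hx => ?_) measurableSet_Ioi
    beta_reduce
    rw [NNReal.smul_def, Real.coe_toNNReal _ (pow_nonneg hx.out.le _)]
  · intro h
    refine h.congr_fun (fun x hx => ?_) measurableSet_Ioi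
    rw [NNReal.smul_def, Real.coe_toNNReal _ (pow_nonneg hx.out.le _)]

end Helpers

noncomputable section RadonAux

def Pmap (d p q : ℕ) (s : ℝ)
    (x : (Fin (d * (q - p)) → ℝ) × (Fin (d * p) → ℝ) × (Fin (d - 1) → ℝ)) :
    HypPoint d p q :=
  (Real.sinh s - 1 / 2 * Real.exp s * ∑ i, x.1 i ^ 2,
    fun i => Real.exp s * x.2.2 i, x.2.1, -x.2.1, -x.1,
    fun i => Real.exp s * x.2.2 i,
    Real.cosh s - 1 / 2 * Real.exp s * ∑ i, x.1 i ^ 2)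

/-- Inner double integral with `w`-scaling removed. -/
def Hfun (d p q : ℕ) (f : HypPoint d p q → ℂ) (s : ℝ) (y : Fin (d * (q - p)) → ℝ) : ℂ :=
  ∫ u : Fin (d * p) → ℝ, ∫ w : Fin (d - 1) → ℝ,
    f (Real.sinh s - 1 / 2 * Real.exp s * ∑ i, y i ^ 2, w, u, -u, -y, w,
      Real.cosh s - 1 / 2 * Real.exp s * ∑ i, y i ^ 2)

def phiR (d p q : ℕ) (f : HypPoint d p q → ℂ) (s : ℝ) (r : ℝ) : ℂ :=
  Gf f (Real.sinh s - 1 / 2 * Real.exp s * r ^ 2, -r,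
    Real.cosh s - 1 / 2 * Real.exp s * r ^ 2)

def psiR (d p q : ℕ) (f : HypPoint d p q → ℂ) (s : ℝ) (v : ℝ) : ℂ :=
  Gf f (-v, -Real.sqrt (1 + 2 * Real.exp (-s) * v - Real.exp (-s) ^ 2),
      Real.exp (-s) - v) *
    (((1 + 2 * Real.exp (-s) * v - Real.exp (-s) ^ 2) ^
      (((d * (q - p) : ℕ) : ℝ) / 2 - 1) : ℝ) : ℂ)

def Tmap (s : ℝ) (r : ℝ) : ℝ := 1 / 2 * Real.exp s * r ^ 2 - Real.sinh s

lemma integral_w_scale (d p q : ℕ) (f : HypPoint d p q → ℂ) (s : ℝ) (a b : ℝ)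
    (u : Fin (d * p) → ℝ) (y : Fin (d * (q - p)) → ℝ) :
    (∫ w : Fin (d - 1) → ℝ, f (a, fun i => Real.exp s * w i, u, -u, y,
        fun i => Real.exp s * w i, b)) =
      (Real.exp s ^ (d - 1))⁻¹ • ∫ w : Fin (d - 1) → ℝ, f (a, w, u, -u, y, w, b) := by
  have h := MeasureTheory.Measure.integral_comp_smul_of_nonneg
    (μ := (volume : Measure (Fin (d - 1) → ℝ)))
    (f := fun w : Fin (d - 1) → ℝ => f (a, w, u, -u, y, w, b)) (Real.exp s)
    (hR := (Real.exp_pos s).le)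
  rw [Module.finrank_fin_fun] at h
  exact h

lemma sum_sq_smul_sphere (m : ℕ) (r : ℝ)
    (vb : Metric.sphere (0 : EuclideanSpace ℝ (Fin m)) 1) :
    ∑ i, (r * (vb : EuclideanSpace ℝ (Fin m)) i) ^ 2 = r ^ 2 := by
  have h1 : ‖(vb : EuclideanSpace ℝ (Fin m))‖ = 1 := mem_sphere_zero_iff_norm.mp vb.2
  rw [EuclideanSpace.norm_eq] at h1
  have h2 : ∑ i, (vb : EuclideanSpace ℝ (Fin m)) i ^ 2 = 1 := by
    have := Real.sqrt_eq_one.mp (by simpa [sq_abs] using h1)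
    simpa using this
  simp_rw [mul_pow, ← Finset.mul_sum, h2, mul_one]


lemma Hfun_smul_sphere (d p q : ℕ) (f : HypPoint d p q → ℂ) (s : ℝ) (r : ℝ)
    (vb : Metric.sphere (0 : EuclideanSpace ℝ (Fin (d * (q - p)))) 1) :
    Hfun d p q f s (fun i => r * (vb : EuclideanSpace ℝ (Fin (d * (q - p)))) i) =
      ∫ u : Fin (d * p) → ℝ, ∫ w : Fin (d - 1) → ℝ,
        f (Real.sinh s - 1 / 2 * Real.exp s * r ^ 2, w, u, -u,
          fun i => -r * (vb : EuclideanSpace ℝ (Fin (d * (q - p)))) i, w,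
          Real.cosh s - 1 / 2 * Real.exp s * r ^ 2) := by
  have h3 : ∑ i, (r * (vb : EuclideanSpace ℝ (Fin (d * (q - p)))) i) ^ 2 = r ^ 2 :=
    sum_sq_smul_sphere _ r vb
  have h4 : (-(fun i => r * (vb : EuclideanSpace ℝ (Fin (d * (q - p)))) i) :
      Fin (d * (q - p)) → ℝ) =
      fun i => -r * (vb : EuclideanSpace ℝ (Fin (d * (q - p)))) i := by
    funext i; simp
  simp only [Hfun]
  rw [h3, h4]

end RadonAux

theorem main_chain (d p q : ℕ) (hd1 : 1 ≤ d) (hm : 0 < d * (q - p))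
    (f : HypPoint d p q → ℂ) (s : ℝ)
    (hFi : Integrable (fun x : (Fin (d * (q - p)) → ℝ) × (Fin (d * p) → ℝ) ×
      (Fin (d - 1) → ℝ) => f (Pmap d p q s x))) :
    IntegrableOn (psiR d p q f s) (Set.Ioi (-Real.sinh s)) ∧
      (∫ v' : Fin (d * (q - p)) → ℝ, ∫ u : Fin (d * p) → ℝ, ∫ w : Fin (d - 1) → ℝ,
          f (Pmap d p q s (v', u, w))) =
        ((Real.exp (-(d : ℝ) * s) : ℝ) : ℂ) *
          ∫ v in Set.Ioi (-Real.sinh s), psiR d p q f s v := by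
  have hes : (0:ℝ) < Real.exp s := Real.exp_pos s
  have hz : (0:ℝ) < Real.exp (-s) := Real.exp_pos _
  have hzes : Real.exp (-s) * Real.exp s = 1 := by rw [← Real.exp_add]; simp
  -- Step 1 : iterated inner integral vs product integral
  have hFiprod : Integrable (fun x : (Fin (d * (q - p)) → ℝ) ×
      ((Fin (d * p) → ℝ) × (Fin (d - 1) → ℝ)) => f (Pmap d p q s x))
      ((volume : Measure (Fin (d * (q - p)) → ℝ)).prod
        (volume : Measure ((Fin (d * p) → ℝ) × (Fin (d - 1) → ℝ)))) := by
    rw [← Measure.volume_eq_prod]; exact hFi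
  have hae : ∀ᵐ v' : Fin (d * (q - p)) → ℝ,
      Integrable (fun yz : (Fin (d * p) → ℝ) × (Fin (d - 1) → ℝ) =>
        f (Pmap d p q s (v', yz))) volume := hFiprod.prod_right_ae
  have hsplit : ∀ᵐ v' : Fin (d * (q - p)) → ℝ,
      (∫ yz : (Fin (d * p) → ℝ) × (Fin (d - 1) → ℝ), f (Pmap d p q s (v', yz))) =
        ∫ u, ∫ w, f (Pmap d p q s (v', u, w)) := by
    filter_upwards [hae] with v' hv'
    rw [Measure.volume_eq_prod] at hv'
    rw [Measure.volume_eq_prod]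
    exact integral_prod _ hv'
  -- Step 2 : scaling in the w variable
  have hscale : ∀ v' : Fin (d * (q - p)) → ℝ,
      (∫ u, ∫ w, f (Pmap d p q s (v', u, w))) =
        (Real.exp s ^ (d - 1))⁻¹ • Hfun d p q f s v' := by
    intro v'
    have inner : ∀ u : Fin (d * p) → ℝ,
        (∫ w : Fin (d - 1) → ℝ, f (Real.sinh s - 1 / 2 * Real.exp s * ∑ i, v' i ^ 2,
            fun i => Real.exp s * w i, u, -u, -v', fun i => Real.exp s * w i,
            Real.cosh s - 1 / 2 * Real.exp s * ∑ i, v' i ^ 2)) = (Real.exp s ^ (d - 1))⁻¹ •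
          ∫ w, f (Real.sinh s - 1 / 2 * Real.exp s * ∑ i, v' i ^ 2, w, u, -u, -v', w,
            Real.cosh s - 1 / 2 * Real.exp s * ∑ i, v' i ^ 2) := fun u =>
      integral_w_scale d p q f s _ _ u (-v')
    rw [Hfun, ← integral_smul]
    exact integral_congr_ae (Filter.Eventually.of_forall inner)
  have hG1'i : Integrable (fun v' : Fin (d * (q - p)) → ℝ =>
      ∫ yz : (Fin (d * p) → ℝ) × (Fin (d - 1) → ℝ), f (Pmap d p q s (v', yz))) :=
    hFiprod.integral_prod_left
  have hG1H : ∀ᵐ v' : Fin (d * (q - p)) → ℝ,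
      (∫ yz : (Fin (d * p) → ℝ) × (Fin (d - 1) → ℝ), f (Pmap d p q s (v', yz))) =
        (Real.exp s ^ (d - 1))⁻¹ • Hfun d p q f s v' := by
    filter_upwards [hsplit] with v' h
    rw [h, hscale v']
  have hHi : Integrable (Hfun d p q f s) := by
    have h1 : Integrable (fun v' : Fin (d * (q - p)) → ℝ =>
        (Real.exp s ^ (d - 1))⁻¹ • Hfun d p q f s v') := hG1'i.congr hG1H
    have h2 := h1.smul (Real.exp s ^ (d - 1))
    refine h2.congr (Filter.Eventually.of_forall fun v' => ?_)
    exact smul_inv_smul₀ (pow_ne_zero _ hes.ne') _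
  have hLHS2 : (∫ v' : Fin (d * (q - p)) → ℝ, ∫ u, ∫ w, f (Pmap d p q s (v', u, w))) =
      (Real.exp s ^ (d - 1))⁻¹ • ∫ v' : Fin (d * (q - p)) → ℝ, Hfun d p q f s v' := by
    rw [← integral_smul]
    refine integral_congr_ae ?_
    filter_upwards [hsplit] with v' h
    rw [← h, ← hscale v', h]
  -- Step 3 : move to Euclidean space
  have hEeq : (∫ v' : Fin (d * (q - p)) → ℝ, Hfun d p q f s v') =
      ∫ y : EuclideanSpace ℝ (Fin (d * (q - p))),
        Hfun d p q f s ((MeasurableEquiv.toLp 2 (Fin (d * (q - p)) → ℝ)).symm y) :=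
    ((EuclideanSpace.volume_preserving_symm_measurableEquiv_toLp (Fin (d * (q - p)))).integral_comp'
      (Hfun d p q f s)).symm
  have hHE : Integrable (fun y : EuclideanSpace ℝ (Fin (d * (q - p))) =>
      Hfun d p q f s ((MeasurableEquiv.toLp 2 (Fin (d * (q - p)) → ℝ)).symm y)) :=
    ((EuclideanSpace.volume_preserving_symm_measurableEquiv_toLp (Fin (d * (q - p)))).integrable_comp_emb
      ((MeasurableEquiv.toLp 2 (Fin (d * (q - p)) → ℝ)).symm).measurableEmbedding).mpr hHi
  haveI : Nontrivial (EuclideanSpace ℝ (Fin (d * (q - p)))) :=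
    Module.nontrivial_of_finrank_pos (R := ℝ) (by rw [finrank_euclideanSpace_fin]; exact hm)
  -- Step 4 : restrict to the complement of 0 and pass to comap
  have h0c : (∫ y : EuclideanSpace ℝ (Fin (d * (q - p))),
      Hfun d p q f s ((MeasurableEquiv.toLp 2 (Fin (d * (q - p)) → ℝ)).symm y)) =
      ∫ x : ({(0 : EuclideanSpace ℝ (Fin (d * (q - p))))}ᶜ : Set _),
        Hfun d p q f s ((MeasurableEquiv.toLp 2 (Fin (d * (q - p)) → ℝ)).symm x)
        ∂(Measure.comap Subtype.val volume) := by
    rw [integral_subtype_comap (measurableSet_singleton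
      (0 : EuclideanSpace ℝ (Fin (d * (q - p))))).compl
      (fun y => Hfun d p q f s ((MeasurableEquiv.toLp 2 (Fin (d * (q - p)) → ℝ)).symm y)),
      restrict_compl_singleton]
  have hcomap_int : Integrable
      (fun x : ({(0 : EuclideanSpace ℝ (Fin (d * (q - p))))}ᶜ : Set _) =>
        Hfun d p q f s ((MeasurableEquiv.toLp 2 (Fin (d * (q - p)) → ℝ)).symm x))
      (Measure.comap Subtype.val volume) :=
    (integrableOn_iff_comap (measurableSet_singleton _).compl _).mp hHE.integrableOn
  -- Step 5 : generalized polar coordinates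
  set g' : Metric.sphere (0 : EuclideanSpace ℝ (Fin (d * (q - p)))) 1 × Set.Ioi (0:ℝ) → ℂ :=
    fun pr => Hfun d p q f s ((MeasurableEquiv.toLp 2 (Fin (d * (q - p)) → ℝ)).symm
      ((homeomorphUnitSphereProd (EuclideanSpace ℝ (Fin (d * (q - p))))).symm pr)) with hg'
  have hcomp : ∀ x : ({(0 : EuclideanSpace ℝ (Fin (d * (q - p))))}ᶜ : Set _),
      g' (homeomorphUnitSphereProd (EuclideanSpace ℝ (Fin (d * (q - p)))) x) =
        Hfun d p q f s ((MeasurableEquiv.toLp 2 (Fin (d * (q - p)) → ℝ)).symm x) := by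
    intro x
    rw [hg']
    simp only [Homeomorph.symm_apply_apply]
  have hpres := Measure.measurePreserving_homeomorphUnitSphereProd
    (volume : Measure (EuclideanSpace ℝ (Fin (d * (q - p)))))
  rw [finrank_euclideanSpace_fin] at hpres
  have hmap : (∫ x : ({(0 : EuclideanSpace ℝ (Fin (d * (q - p))))}ᶜ : Set _),
      Hfun d p q f s ((MeasurableEquiv.toLp 2 (Fin (d * (q - p)) → ℝ)).symm x)
      ∂(Measure.comap Subtype.val volume)) =
      ∫ pr, g' pr ∂((volume : Measure (EuclideanSpace ℝ (Fin (d * (q - p))))).toSphere.prod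
        (Measure.volumeIoiPow (d * (q - p) - 1))) := by
    rw [← hpres.integral_comp (Homeomorph.measurableEmbedding _) g']
    exact integral_congr_ae (Filter.Eventually.of_forall fun x => (hcomp x).symm)
  have hg'int : Integrable g'
      ((volume : Measure (EuclideanSpace ℝ (Fin (d * (q - p))))).toSphere.prod
        (Measure.volumeIoiPow (d * (q - p) - 1))) := by
    refine (hpres.integrable_comp_emb (Homeomorph.measurableEmbedding _)).mp ?_
    refine hcomap_int.congr ?_
    exact Filter.Eventually.of_forall fun x => (hcomp x).symm
  have hps : (∫ pr, g' pr
      ∂((volume : Measure (EuclideanSpace ℝ (Fin (d * (q - p))))).toSphere.prod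
        (Measure.volumeIoiPow (d * (q - p) - 1)))) =
      ∫ r : Set.Ioi (0:ℝ), (∫ vb, g' (vb, r)
        ∂(volume : Measure (EuclideanSpace ℝ (Fin (d * (q - p))))).toSphere)
        ∂(Measure.volumeIoiPow (d * (q - p) - 1)) :=
    integral_prod_symm g' hg'int
  -- Step 6 : the spherical integral is `phiR`
  have hsphere : ∀ r : Set.Ioi (0:ℝ),
      (∫ vb, g' (vb, r)
        ∂(volume : Measure (EuclideanSpace ℝ (Fin (d * (q - p))))).toSphere) =
        phiR d p q f s r := by
    intro r
    simp only [phiR, Gf]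
    refine integral_congr_ae (Filter.Eventually.of_forall fun vb => ?_)
    beta_reduce
    have h1 : ((((homeomorphUnitSphereProd
        (EuclideanSpace ℝ (Fin (d * (q - p))))).symm (vb, r)) : _) :
        EuclideanSpace ℝ (Fin (d * (q - p)))) =
        (r : ℝ) • (vb : EuclideanSpace ℝ (Fin (d * (q - p)))) := by simp
    have h2 : g' (vb, r) = Hfun d p q f s
        (fun i => (r:ℝ) * (vb : EuclideanSpace ℝ (Fin (d * (q - p)))) i) := by
      rw [hg']
      show Hfun d p q f s _ = _
      rw [h1]
      rfl
    rw [h2, Hfun_smul_sphere]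
  -- Step 7 : from `volumeIoiPow` to Lebesgue measure
  have hIoi : (∫ r : Set.Ioi (0:ℝ), (∫ vb, g' (vb, r)
      ∂(volume : Measure (EuclideanSpace ℝ (Fin (d * (q - p))))).toSphere)
      ∂(Measure.volumeIoiPow (d * (q - p) - 1))) =
      ∫ t in Set.Ioi (0:ℝ), t ^ (d * (q - p) - 1) • phiR d p q f s t := by
    rw [integral_congr_ae (Filter.Eventually.of_forall hsphere)]
    exact integral_volumeIoiPow' _ _
  have hphiInt : IntegrableOn (fun t => t ^ (d * (q - p) - 1) • phiR d p q f s t)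
      (Set.Ioi (0:ℝ)) := by
    refine (integrable_volumeIoiPow_iff' _ _).mp ?_
    exact (hg'int.integral_prod_right).congr (Filter.Eventually.of_forall hsphere)
  -- Step 8 : the substitution v = Tmap s r
  have hder : ∀ r ∈ Set.Ioi (0:ℝ), HasDerivWithinAt (Tmap s) (Real.exp s * r)
      (Set.Ioi 0) r := by
    intro r hr
    have h : HasDerivAt (Tmap s) (Real.exp s * r) r := by
      unfold Tmap
      have h := ((hasDerivAt_pow 2 r).const_mul (1 / 2 * Real.exp s)).sub_const (Real.sinh s)
      convert h using 1
      rfl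
      rfl
      simp [pow_one]
      ring
    exact h.hasDerivWithinAt
  have hinj : Set.InjOn (Tmap s) (Set.Ioi 0) := by
    intro a ha b hb h
    unfold Tmap at h
    have h1 : (1/2 * Real.exp s) * a ^ 2 = (1/2 * Real.exp s) * b ^ 2 := by linarith
    have h2 : a ^ 2 = b ^ 2 := mul_left_cancel₀ (by positivity) h1
    calc a = Real.sqrt (a ^ 2) := (Real.sqrt_sq ha.out.le).symm
      _ = Real.sqrt (b ^ 2) := by rw [h2]
      _ = b := Real.sqrt_sq hb.out.le
  have hTim : Tmap s '' Set.Ioi 0 = Set.Ioi (-Real.sinh s) := by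
    ext v
    simp only [Set.mem_image, Set.mem_Ioi]
    constructor
    · rintro ⟨r, hr, rfl⟩
      unfold Tmap
      nlinarith [mul_pos hes (pow_pos hr 2)]
    · intro hv
      have hv' : 0 < v + Real.sinh s := by linarith
      refine ⟨Real.sqrt (2 * Real.exp (-s) * (v + Real.sinh s)),
        Real.sqrt_pos.mpr (by positivity), ?_⟩
      unfold Tmap
      rw [Real.sq_sqrt (by positivity)]
      linear_combination (v + Real.sinh s) * hzes
  have hpt : ∀ r ∈ Set.Ioi (0:ℝ), |Real.exp s * r| • psiR d p q f s (Tmap s r) =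
      Real.exp s • ((r ^ (d * (q - p) - 1) : ℝ) • phiR d p q f s r) := by
    intro r hr
    have hr0 : (0:ℝ) < r := hr
    have hkey : 1 + 2 * Real.exp (-s) * Tmap s r - Real.exp (-s) ^ 2 = r ^ 2 := by
      have hsinh := Real.sinh_eq s
      unfold Tmap
      linear_combination (r ^ 2 - 1) * hzes - 2 * Real.exp (-s) * hsinh
    have hneg : -(Tmap s r) = Real.sinh s - 1 / 2 * Real.exp s * r ^ 2 := by
      unfold Tmap; ring
    have hzv : Real.exp (-s) - Tmap s r = Real.cosh s - 1 / 2 * Real.exp s * r ^ 2 := by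
      have h := Real.cosh_sub_sinh s
      unfold Tmap
      linear_combination (-1 : ℝ) * h
    have hpow : ((1 + 2 * Real.exp (-s) * Tmap s r - Real.exp (-s) ^ 2) ^
        (((d * (q - p) : ℕ) : ℝ) / 2 - 1)) = r ^ (((d * (q - p) : ℕ) : ℝ) - 2) := by
      rw [hkey, ← Real.rpow_natCast r 2, ← Real.rpow_mul hr0.le]
      congr 1
      push_cast
      ring
    have hsq : Real.sqrt (1 + 2 * Real.exp (-s) * Tmap s r - Real.exp (-s) ^ 2) = r := by
      rw [hkey]; exact Real.sqrt_sq hr0.le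
    rw [psiR, phiR, hsq, hneg, hzv, hpow]
    rw [abs_of_pos (mul_pos hes hr0)]
    have hm1 : ((d * (q - p) : ℕ) : ℝ) - 2 + 1 = ((d * (q - p) - 1 : ℕ) : ℝ) := by
      rw [Nat.cast_sub hm]
      push_cast
      ring
    have hr2 : (Real.exp s * r) * r ^ (((d * (q - p) : ℕ) : ℝ) - 2) =
        Real.exp s * r ^ (d * (q - p) - 1 : ℕ) := by
      rw [mul_assoc]
      congr 1
      rw [← Real.rpow_natCast r (d * (q - p) - 1), ← hm1, Real.rpow_add_one hr0.ne']
      ring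
    rw [Complex.real_smul, Complex.real_smul, Complex.real_smul]
    have hc : ((Real.exp s * r : ℝ) : ℂ) * ((r ^ (((d * (q - p) : ℕ) : ℝ) - 2) : ℝ) : ℂ) =
        ((Real.exp s : ℝ) : ℂ) * ((r ^ (d * (q - p) - 1 : ℕ) : ℝ) : ℂ) := by
      rw [← Complex.ofReal_mul, ← Complex.ofReal_mul, hr2]
    linear_combination (Gf f (Real.sinh s - 1 / 2 * Real.exp s * r ^ 2, -r,
      Real.cosh s - 1 / 2 * Real.exp s * r ^ 2)) * hc
  have hsub : (∫ v in Set.Ioi (-Real.sinh s), psiR d p q f s v) =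
      Real.exp s • ∫ t in Set.Ioi (0:ℝ), (t ^ (d * (q - p) - 1) : ℝ) • phiR d p q f s t := by
    rw [← hTim, integral_image_eq_integral_abs_deriv_smul measurableSet_Ioi hder hinj,
      setIntegral_congr_fun measurableSet_Ioi hpt, integral_smul]
  constructor
  · -- integrability of psiR on the image
    rw [← hTim, integrableOn_image_iff_integrableOn_abs_deriv_smul measurableSet_Ioi hder hinj]
    exact IntegrableOn.congr_fun (hphiInt.smul (Real.exp s))
      (fun r hr => (hpt r hr).symm) measurableSet_Ioi
  · -- the final equality
    have hscal : (Real.exp s ^ (d - 1))⁻¹ = Real.exp (-(d : ℝ) * s) * Real.exp s := by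
      rw [← Real.exp_nat_mul, ← Real.exp_neg, ← Real.exp_add]
      congr 1
      rw [Nat.cast_sub hd1]
      push_cast
      ring
    calc (∫ v' : Fin (d * (q - p)) → ℝ, ∫ u, ∫ w, f (Pmap d p q s (v', u, w)))
        = (Real.exp s ^ (d - 1))⁻¹ • ∫ v' : Fin (d * (q - p)) → ℝ, Hfun d p q f s v' := hLHS2
      _ = (Real.exp s ^ (d - 1))⁻¹ •
          ∫ t in Set.Ioi (0:ℝ), (t ^ (d * (q - p) - 1) : ℝ) • phiR d p q f s t := by
          rw [hEeq, h0c, hmap, hps, hIoi]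
      _ = ((Real.exp (-(d : ℝ) * s) : ℝ) : ℂ) *
          ∫ v in Set.Ioi (-Real.sinh s), psiR d p q f s v := by
          rw [hsub, ← Complex.real_smul, smul_smul, ← hscal]



lemma Qform_Pmap (d p q : ℕ) (s : ℝ)
    (x : (Fin (d * (q - p)) → ℝ) × (Fin (d * p) → ℝ) × (Fin (d - 1) → ℝ)) :
    Qform (Pmap d p q s x) = -1 := by
  have h1 : Real.cosh s ^ 2 - Real.sinh s ^ 2 = 1 := Real.cosh_sq_sub_sinh_sq s
  have h2 : Real.exp s * Real.exp (-s) = 1 := by rw [← Real.exp_add]; simp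
  have h3 : Real.cosh s - Real.sinh s = Real.exp (-s) := Real.cosh_sub_sinh s
  simp only [Qform, Pmap, Pi.neg_apply, neg_sq]
  set t := ∑ i, x.1 i ^ 2
  linear_combination (-1 : ℝ) * h1 + (Real.exp s * t) * h3 + t * h2

lemma continuous_Pmap (d p q : ℕ) (s : ℝ) : Continuous (Pmap d p q s) := by
  unfold Pmap; fun_prop

theorem aux_integrable (d p q : ℕ) (f : HypPoint d p q → ℂ)
    (hcont : ContinuousOn f {x | Qform x < 0})
    (hdecay : ∀ M : ℕ, ∃ CM : ℝ, ∀ x : HypPoint d p q, Qform x = -1 →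
      ‖f x‖ ≤ CM * (1 + normE x) ^ (-(M : ℝ))) (s : ℝ) :
    Integrable (fun x : (Fin (d * (q - p)) → ℝ) × (Fin (d * p) → ℝ) × (Fin (d - 1) → ℝ) =>
      f (Pmap d p q s x)) := by
  have hes : (0:ℝ) < Real.exp s := Real.exp_pos s
  have hz : (0:ℝ) < Real.exp (-s) := Real.exp_pos _
  have hzes : Real.exp (-s) * Real.exp s = 1 := by rw [← Real.exp_add]; simp
  have hFc : Continuous fun x => f (Pmap d p q s x) :=
    hcont.comp_continuous (continuous_Pmap d p q s)
      (fun x => by simp [Set.mem_setOf_eq, Qform_Pmap d p q s x])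
  set M : ℕ := d * (q - p) + d * p + (d - 1) + 1 with hM
  obtain ⟨CM, hCM⟩ := hdecay M
  set c : ℝ := max 1 (Real.exp (-s)) with hc
  have hc1 : 1 ≤ c := le_max_left _ _
  have hc0 : 0 < c := lt_of_lt_of_le one_pos hc1
  have hnorm : ∀ x : (Fin (d * (q - p)) → ℝ) × (Fin (d * p) → ℝ) × (Fin (d - 1) → ℝ),
      ‖x‖ ≤ c * normE (Pmap d p q s x) := by
    rintro ⟨v', u, w⟩
    obtain ⟨S, hS⟩ : ∃ S : ℝ, (Real.sinh s - 1 / 2 * Real.exp s * ∑ i, v' i ^ 2) ^ 2 +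
          (∑ i, (Real.exp s * w i) ^ 2) + (∑ i, u i ^ 2) + (∑ i, u i ^ 2) +
          (∑ i, v' i ^ 2) + (∑ i, (Real.exp s * w i) ^ 2) +
          (Real.cosh s - 1 / 2 * Real.exp s * ∑ i, v' i ^ 2) ^ 2 = S := ⟨_, rfl⟩
    have hN : normE (Pmap d p q s (v', u, w)) = Real.sqrt S := by
      simp only [normE, Pmap, Pi.neg_apply, neg_sq]
      rw [hS]
    have h0v : (0:ℝ) ≤ ∑ i, v' i ^ 2 := Finset.sum_nonneg fun i _ => sq_nonneg _
    have h0u : (0:ℝ) ≤ ∑ i, u i ^ 2 := Finset.sum_nonneg fun i _ => sq_nonneg _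
    have h0w : (0:ℝ) ≤ ∑ i, (Real.exp s * w i) ^ 2 :=
      Finset.sum_nonneg fun i _ => sq_nonneg _
    have hsqS : 0 ≤ Real.sqrt S := Real.sqrt_nonneg _
    have hv : ∀ i, |v' i| ≤ Real.sqrt S := by
      intro i
      refine Real.abs_le_sqrt ?_
      have h1 : v' i ^ 2 ≤ ∑ j, v' j ^ 2 :=
        Finset.single_le_sum (fun j _ => sq_nonneg (v' j)) (Finset.mem_univ i)
      nlinarith [sq_nonneg (Real.sinh s - 1 / 2 * Real.exp s * ∑ i, v' i ^ 2),
        sq_nonneg (Real.cosh s - 1 / 2 * Real.exp s * ∑ i, v' i ^ 2), hS]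
    have hu : ∀ i, |u i| ≤ Real.sqrt S := by
      intro i
      refine Real.abs_le_sqrt ?_
      have h1 : u i ^ 2 ≤ ∑ j, u j ^ 2 :=
        Finset.single_le_sum (fun j _ => sq_nonneg (u j)) (Finset.mem_univ i)
      nlinarith [sq_nonneg (Real.sinh s - 1 / 2 * Real.exp s * ∑ i, v' i ^ 2),
        sq_nonneg (Real.cosh s - 1 / 2 * Real.exp s * ∑ i, v' i ^ 2), hS]
    have hw : ∀ i, |w i| ≤ Real.exp (-s) * Real.sqrt S := by
      intro i
      have h1 : |Real.exp s * w i| ≤ Real.sqrt S := by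
        refine Real.abs_le_sqrt ?_
        have h1 : (Real.exp s * w i) ^ 2 ≤ ∑ j, (Real.exp s * w j) ^ 2 :=
          Finset.single_le_sum (fun j _ => sq_nonneg (Real.exp s * w j)) (Finset.mem_univ i)
        nlinarith [sq_nonneg (Real.sinh s - 1 / 2 * Real.exp s * ∑ i, v' i ^ 2),
          sq_nonneg (Real.cosh s - 1 / 2 * Real.exp s * ∑ i, v' i ^ 2), hS]
      rw [abs_mul, abs_of_pos hes] at h1
      calc |w i| = Real.exp (-s) * (Real.exp s * |w i|) := by
            rw [← mul_assoc, hzes, one_mul]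
        _ ≤ Real.exp (-s) * Real.sqrt S := by
            exact mul_le_mul_of_nonneg_left h1 hz.le
    rw [hN]
    have hcs : 0 ≤ c * Real.sqrt S := mul_nonneg hc0.le hsqS
    refine norm_prod_le_iff.mpr ⟨?_, norm_prod_le_iff.mpr ⟨?_, ?_⟩⟩
    · refine (pi_norm_le_iff_of_nonneg hcs).mpr fun i => ?_
      rw [Real.norm_eq_abs]
      exact (hv i).trans (le_mul_of_one_le_left hsqS hc1)
    · refine (pi_norm_le_iff_of_nonneg hcs).mpr fun i => ?_
      rw [Real.norm_eq_abs]
      exact (hu i).trans (le_mul_of_one_le_left hsqS hc1)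
    · refine (pi_norm_le_iff_of_nonneg hcs).mpr fun i => ?_
      rw [Real.norm_eq_abs]
      exact (hw i).trans (mul_le_mul_of_nonneg_right (le_max_right _ _) hsqS)
  have hfin : (Module.finrank ℝ ((Fin (d * (q - p)) → ℝ) × (Fin (d * p) → ℝ) ×
      (Fin (d - 1) → ℝ)) : ℝ) < (M : ℝ) := by
    rw [Module.finrank_prod, Module.finrank_prod, Module.finrank_fin_fun,
      Module.finrank_fin_fun, Module.finrank_fin_fun]
    rw [hM]
    push_cast
    linarith
  haveI : (volume : Measure ((Fin (d * p) → ℝ) × (Fin (d - 1) → ℝ))).IsAddHaarMeasure :=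
    Measure.prod.instIsAddHaarMeasure volume volume
  haveI : (volume : Measure ((Fin (d * (q - p)) → ℝ) × (Fin (d * p) → ℝ) ×
      (Fin (d - 1) → ℝ))).IsAddHaarMeasure :=
    Measure.prod.instIsAddHaarMeasure volume volume
  have hint : Integrable (fun x : (Fin (d * (q - p)) → ℝ) × (Fin (d * p) → ℝ) ×
      (Fin (d - 1) → ℝ) => (|CM| * c ^ (M:ℝ)) * (1 + ‖x‖) ^ (-(M:ℝ))) :=
    (integrable_one_add_norm hfin).const_mul _
  refine hint.mono' hFc.aestronglyMeasurable (Filter.Eventually.of_forall fun x => ?_)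
  have hN0 : 0 ≤ normE (Pmap d p q s x) := Real.sqrt_nonneg _
  have hx0 : (0:ℝ) ≤ ‖x‖ := norm_nonneg x
  have hbase : 0 < c⁻¹ * (1 + ‖x‖) := by positivity
  have hle : c⁻¹ * (1 + ‖x‖) ≤ 1 + normE (Pmap d p q s x) := by
    have h := hnorm x
    have hcc : c * c⁻¹ = 1 := mul_inv_cancel₀ hc0.ne'
    have hci : c⁻¹ ≤ 1 := by
      rw [inv_le_one_iff₀]; right; exact hc1
    nlinarith [mul_le_mul_of_nonneg_left h (le_of_lt (inv_pos.mpr hc0))]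
  have h6 := Real.rpow_le_rpow_of_nonpos hbase hle
    (neg_nonpos.mpr (Nat.cast_nonneg M))
  have h7 : (c⁻¹ * (1 + ‖x‖)) ^ (-(M:ℝ)) = c ^ (M:ℝ) * (1 + ‖x‖) ^ (-(M:ℝ)) := by
    rw [Real.mul_rpow (inv_nonneg.mpr hc0.le) (by positivity), Real.inv_rpow hc0.le,
      Real.rpow_neg hc0.le, inv_inv]
  rw [h7] at h6
  calc ‖f (Pmap d p q s x)‖ ≤ CM * (1 + normE (Pmap d p q s x)) ^ (-(M:ℝ)) :=
        hCM _ (Qform_Pmap d p q s x)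
    _ ≤ |CM| * (1 + normE (Pmap d p q s x)) ^ (-(M:ℝ)) :=
        mul_le_mul_of_nonneg_right (le_abs_self CM) (Real.rpow_nonneg (by linarith) _)
    _ ≤ |CM| * (c ^ (M:ℝ) * (1 + ‖x‖) ^ (-(M:ℝ))) :=
        mul_le_mul_of_nonneg_left h6 (abs_nonneg _)
    _ = (|CM| * c ^ (M:ℝ)) * (1 + ‖x‖) ^ (-(M:ℝ)) := by ring

/-- If `f` is continuous on the cone `C = {Q < 0}`, homogeneous of degree zero, and
rapidly decreasing on the hyperboloid `{Q = -1}`, then for every `s ∈ ℝ`, writing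
`z = e^{-s}`, the change-of-variables identity
`∫∫∫ f(sinh s - ½eˢ|v'|², eˢw, u, -u, -v', eˢw, cosh s - ½eˢ|v'|²) dw du dv'
  = e^{-ds} ∫_{-sinh s}^∞ G_f(-v, -(1+2zv-z²)^{1/2}, z-v) (1+2zv-z²)^{d(q-p)/2-1} dv`
holds, both sides being absolutely convergent. -/
theorem radon_change_of_variables (d p q : ℕ) (hd : d = 1 ∨ d = 2 ∨ d = 4) (hpq : p < q)
    (f : HypPoint d p q → ℂ)
    (hcont : ContinuousOn f {x | Qform x < 0})
    (hhom : ∀ (lam : ℝ), lam ≠ 0 → ∀ x : HypPoint d p q, Qform x < 0 → f (lam • x) = f x)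
    (hdecay : ∀ M : ℕ, ∃ CM : ℝ, ∀ x : HypPoint d p q, Qform x = -1 →
      ‖f x‖ ≤ CM * (1 + normE x) ^ (-(M : ℝ))) :
    ∀ s : ℝ,
      Integrable (fun x : (Fin (d * (q - p)) → ℝ) × (Fin (d * p) → ℝ) × (Fin (d - 1) → ℝ) =>
        f (Real.sinh s - 1 / 2 * Real.exp s * ∑ i, x.1 i ^ 2,
          fun i => Real.exp s * x.2.2 i, x.2.1, -x.2.1, -x.1,
          fun i => Real.exp s * x.2.2 i,
          Real.cosh s - 1 / 2 * Real.exp s * ∑ i, x.1 i ^ 2)) ∧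
      IntegrableOn (fun v : ℝ =>
        Gf f (-v, -Real.sqrt (1 + 2 * Real.exp (-s) * v - Real.exp (-s) ^ 2),
            Real.exp (-s) - v) *
          (((1 + 2 * Real.exp (-s) * v - Real.exp (-s) ^ 2) ^
            (((d * (q - p) : ℕ) : ℝ) / 2 - 1) : ℝ) : ℂ))
        (Set.Ioi (-Real.sinh s)) ∧
      (∫ v' : Fin (d * (q - p)) → ℝ, ∫ u : Fin (d * p) → ℝ, ∫ w : Fin (d - 1) → ℝ,
          f (Real.sinh s - 1 / 2 * Real.exp s * ∑ i, v' i ^ 2,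
            fun i => Real.exp s * w i, u, -u, -v',
            fun i => Real.exp s * w i,
            Real.cosh s - 1 / 2 * Real.exp s * ∑ i, v' i ^ 2)) =
        ((Real.exp (-(d : ℝ) * s) : ℝ) : ℂ) *
          ∫ v in Set.Ioi (-Real.sinh s),
            Gf f (-v, -Real.sqrt (1 + 2 * Real.exp (-s) * v - Real.exp (-s) ^ 2),
                Real.exp (-s) - v) *
              (((1 + 2 * Real.exp (-s) * v - Real.exp (-s) ^ 2) ^
                (((d * (q - p) : ℕ) : ℝ) / 2 - 1) : ℝ) : ℂ) := by
  intro s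
  have hd1 : 1 ≤ d := by rcases hd with h | h | h <;> omega
  have hm : 0 < d * (q - p) := Nat.mul_pos (by omega) (by omega)
  have hFi := aux_integrable d p q f hcont hdecay s
  obtain ⟨h2, h3⟩ := main_chain d p q hd1 hm f s hFi
  exact ⟨hFi, h2, h3⟩
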